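/- Let H be a pre-syndetic subgroup of a skew-amenable topological group G. Then for every d ∈ Δ(G) there exists a right-invariant mean μ on RUCB(G) such that μ(χ_{H,d}) > 0. -/

import Mathlib

open scoped Topology

/-- A mean on the space of real-valued functions satisfying predicate `P`. -/
def IsMean {X : Type*} (P : (X → ℝ) → Prop) (μ : (X → ℝ) → ℝ) : Prop :=
  μ (fun _ => (1 : ℝ)) = 1 ∧
  (∀ f, P f → (∀ x, 0 ≤ f x) → 0 ≤ μ f) ∧
  (∀ f g, P f → P g → μ (fun x => f x + g x) = μ f + μ g) ∧
  (∀ (c : ℝ) (f), P f → μ (fun x => c * f x) = c * μ f)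

/-- `f : G → ℝ` is bounded and right uniformly continuous. -/
def IsRUCB (G : Type*) [Group G] [TopologicalSpace G] (f : G → ℝ) : Prop :=
  (∃ C, ∀ x, |f x| ≤ C) ∧
  ∀ ε : ℝ, 0 < ε → ∃ V ∈ 𝓝 (1 : G), ∀ v ∈ V, ∀ x, |f (v * x) - f x| < ε

/-- A topological group is skew-amenable if there is a right-invariant mean on `RUCB(G)`. -/
def SkewAmenable (G : Type*) [Group G] [TopologicalSpace G] : Prop :=
  ∃ μ : (G → ℝ) → ℝ, IsMean (IsRUCB G) μ ∧
    ∀ (g : G) (f : G → ℝ), IsRUCB G f → μ (fun x => f (x * g)) = μ f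

/-- A subgroup `H ≤ G` is pre-syndetic if for every identity neighbourhood `U`
there is a finite set `E` with `G = EUH`. -/
def PreSyndetic {G : Type*} [Group G] [TopologicalSpace G] (H : Subgroup G) : Prop :=
  ∀ U ∈ 𝓝 (1 : G), ∃ E : Finset G, ∀ g : G, ∃ e ∈ E, ∃ u ∈ U, ∃ h ∈ H, g = e * u * h

/-- `d` is a bounded right-invariant continuous pseudo-metric on `G`. -/
def InDelta (G : Type*) [Group G] [TopologicalSpace G] (d : G → G → ℝ) : Prop :=
  (∀ x y, 0 ≤ d x y) ∧ (∀ x, d x x = 0) ∧ (∀ x y, d x y = d y x) ∧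
  (∀ x y z, d x z ≤ d x y + d y z) ∧ (∃ C, ∀ x y, d x y ≤ C) ∧
  Continuous (fun p : G × G => d p.1 p.2) ∧
  (∀ x y g, d (x * g) (y * g) = d x y)

/-- The function `χ_{H,d}(x) = max (1 - inf_{h ∈ H} d(x,h)) 0`. -/
noncomputable def chi {G : Type*} [Group G] (H : Subgroup G) (d : G → G → ℝ) (x : G) : ℝ :=
  max (1 - ⨅ h : ↥H, d x (h : G)) 0

section aux
variable {G : Type*} [Group G] [TopologicalSpace G] [IsTopologicalGroup G]

omit [IsTopologicalGroup G] in
lemma isRUCB_const (c : ℝ) : IsRUCB G (fun _ => c) := by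
  refine ⟨⟨|c|, fun _ => le_rfl⟩, fun ε hε => ⟨Set.univ, Filter.univ_mem, ?_⟩⟩
  simpa using hε

omit [IsTopologicalGroup G] in
lemma isRUCB_add {f g : G → ℝ} (hf : IsRUCB G f) (hg : IsRUCB G g) :
    IsRUCB G (fun x => f x + g x) := by
  obtain ⟨⟨C, hC⟩, hf2⟩ := hf
  obtain ⟨⟨D, hD⟩, hg2⟩ := hg
  refine ⟨⟨C + D, fun x => (abs_add_le _ _).trans (add_le_add (hC x) (hD x))⟩, fun ε hε => ?_⟩
  obtain ⟨V, hV, hVf⟩ := hf2 (ε/2) (by linarith)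
  obtain ⟨W, hW, hWg⟩ := hg2 (ε/2) (by linarith)
  refine ⟨V ∩ W, Filter.inter_mem hV hW, fun v hv x => ?_⟩
  have h1 := hVf v hv.1 x
  have h2 := hWg v hv.2 x
  calc |f (v*x) + g (v*x) - (f x + g x)| ≤ |f (v*x) - f x| + |g (v*x) - g x| := by
        rw [show f (v*x) + g (v*x) - (f x + g x) = (f (v*x) - f x) + (g (v*x) - g x) by ring]
        exact abs_add_le _ _
    _ < ε := by linarith

lemma isRUCB_leftTranslate (a : G) {f : G → ℝ} (hf : IsRUCB G f) :
    IsRUCB G (fun x => f (a * x)) := by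
  obtain ⟨⟨C, hC⟩, hf2⟩ := hf
  refine ⟨⟨C, fun x => hC _⟩, fun ε hε => ?_⟩
  obtain ⟨V, hV, hVf⟩ := hf2 ε hε
  have hcont : Continuous (fun v : G => a * v * a⁻¹) := by continuity
  refine ⟨(fun v : G => a * v * a⁻¹) ⁻¹' V, ?_, fun v hv x => ?_⟩
  · apply hcont.continuousAt.preimage_mem_nhds
    simpa using hV
  · have := hVf _ hv (a * x)
    have heq : a * v * a⁻¹ * (a * x) = a * (v * x) := by group
    rwa [heq] at this

omit [IsTopologicalGroup G] in
lemma isRUCB_sum {ι : Type*} (E : Finset ι) (f : ι → G → ℝ)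
    (h : ∀ i ∈ E, IsRUCB G (f i)) : IsRUCB G (fun x => ∑ i ∈ E, f i x) := by
  classical
  induction E using Finset.induction_on with
  | empty => simpa using isRUCB_const 0
  | insert _ _ hnotmem ih =>
    rename_i a s
    simp only [Finset.sum_insert hnotmem]
    exact isRUCB_add (h a (Finset.mem_insert_self a s))
      (ih fun i hi => h i (Finset.mem_insert_of_mem hi))

omit [IsTopologicalGroup G] in
lemma mean_const {μ : (G → ℝ) → ℝ} (hμ : IsMean (IsRUCB G) μ) (c : ℝ) :
    μ (fun _ => c) = c := by
  obtain ⟨h1, _, _, hs⟩ := hμ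
  have := hs c (fun _ => (1:ℝ)) (isRUCB_const 1)
  simpa [h1] using this

omit [IsTopologicalGroup G] in
lemma mean_ge_const {μ : (G → ℝ) → ℝ} (hμ : IsMean (IsRUCB G) μ) {f : G → ℝ} {c : ℝ}
    (hf : IsRUCB G f) (h : ∀ x, c ≤ f x) : c ≤ μ f := by
  obtain ⟨h1, hpos, hadd, hs⟩ := hμ
  have hg : IsRUCB G (fun x => f x + (-c)) := isRUCB_add hf (isRUCB_const (-c))
  have key := hadd (fun x => f x + (-c)) (fun _ => c) hg (isRUCB_const c)
  have hfe : (fun x => (fun x => f x + (-c)) x + (fun _ => c) x) = f := by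
    funext x; ring
  rw [hfe] at key
  have hnn : 0 ≤ μ (fun x => f x + (-c)) :=
    hpos _ hg (fun x => by have := h x; linarith)
  have hc := mean_const ⟨h1, hpos, hadd, hs⟩ c
  rw [key, hc]
  linarith

omit [IsTopologicalGroup G] in
lemma mean_sum {μ : (G → ℝ) → ℝ} (hμ : IsMean (IsRUCB G) μ) {ι : Type*} (E : Finset ι)
    (f : ι → G → ℝ) (h : ∀ i ∈ E, IsRUCB G (f i)) :
    μ (fun x => ∑ i ∈ E, f i x) = ∑ i ∈ E, μ (f i) := by
  classical
  induction E using Finset.induction_on with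
  | empty => simpa using mean_const hμ 0
  | insert _ _ hnotmem ih =>
    rename_i a s
    simp only [Finset.sum_insert hnotmem]
    have := hμ.2.2.1 (f a) (fun x => ∑ i ∈ s, f i x)
      (h a (Finset.mem_insert_self a s))
      (isRUCB_sum s f (fun i hi => h i (Finset.mem_insert_of_mem hi)))
    rw [this, ih (fun i hi => h i (Finset.mem_insert_of_mem hi))]

end aux

section chiLemmas
variable {G : Type*} [Group G] [TopologicalSpace G] [IsTopologicalGroup G]
variable (H : Subgroup G) (d : G → G → ℝ)

omit [IsTopologicalGroup G] in
lemma infd_bddBelow (hd : InDelta G d) (x : G) :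
    BddBelow (Set.range fun h : ↥H => d x (h : G)) := by
  refine ⟨0, fun r hr => ?_⟩
  obtain ⟨h, rfl⟩ := hr
  exact hd.1 x h

omit [IsTopologicalGroup G] in
lemma infd_nonneg (hd : InDelta G d) (x : G) : 0 ≤ ⨅ h : ↥H, d x (h : G) :=
  le_ciInf fun h => hd.1 x h

omit [IsTopologicalGroup G] in
lemma infd_le (hd : InDelta G d) (x : G) (h : ↥H) :
    (⨅ h : ↥H, d x (h : G)) ≤ d x (h : G) :=
  ciInf_le (infd_bddBelow H d hd x) h

omit [IsTopologicalGroup G] in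
lemma infd_lipschitz (hd : InDelta G d) (x y : G) :
    |(⨅ h : ↥H, d x (h : G)) - ⨅ h : ↥H, d y (h : G)| ≤ d x y := by
  have hne : Nonempty ↥H := ⟨⟨1, H.one_mem⟩⟩
  have key : ∀ a b : G, (⨅ h : ↥H, d a (h : G)) ≤ d a b + ⨅ h : ↥H, d b (h : G) := by
    intro a b
    have h1 : (⨅ h : ↥H, d a (h : G)) - d a b ≤ ⨅ h : ↥H, d b (h : G) := by
      refine le_ciInf fun h => ?_
      have htri := hd.2.2.2.1 a b (h : G)
      have h2 : (⨅ h : ↥H, d a (h : G)) ≤ d a (h : G) := infd_le H d hd a h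
      linarith
    linarith
  rw [abs_sub_le_iff]
  constructor
  · have := key x y; linarith
  · have := key y x; rw [hd.2.2.1 y x] at this; linarith

omit [IsTopologicalGroup G] [TopologicalSpace G] in
lemma chi_nonneg (x : G) : 0 ≤ chi H d x := le_max_right _ _

omit [IsTopologicalGroup G] in
lemma chi_lipschitz (hd : InDelta G d) (x y : G) : |chi H d x - chi H d y| ≤ d x y := by
  unfold chi
  calc |max (1 - ⨅ h : ↥H, d x (h:G)) 0 - max (1 - ⨅ h : ↥H, d y (h:G)) 0|
      ≤ |(1 - ⨅ h : ↥H, d x (h:G)) - (1 - ⨅ h : ↥H, d y (h:G))| :=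
        abs_max_sub_max_le_abs _ _ _
    _ = |(⨅ h : ↥H, d y (h:G)) - (⨅ h : ↥H, d x (h:G))| := by ring_nf
    _ ≤ d y x := infd_lipschitz H d hd y x
    _ = d x y := hd.2.2.1 y x

omit [IsTopologicalGroup G] in
lemma chi_rucb (hd : InDelta G d) : IsRUCB G (chi H d) := by
  constructor
  · refine ⟨1, fun x => ?_⟩
    rw [abs_le]
    constructor
    · linarith [chi_nonneg H d x]
    · exact max_le (by linarith [infd_nonneg H d hd x]) zero_le_one
  · intro ε hε
    have hcont : Continuous (fun v : G => d v 1) :=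
      hd.2.2.2.2.2.1.comp (continuous_id.prodMk continuous_const)
    refine ⟨(fun v : G => d v 1) ⁻¹' Set.Iio ε, ?_, fun v hv x => ?_⟩
    · apply hcont.continuousAt.preimage_mem_nhds
      rw [hd.2.1 1]
      exact Iio_mem_nhds hε
    · have hlip := chi_lipschitz H d hd (v * x) x
      have : d (v * x) x = d v 1 := by
        have := hd.2.2.2.2.2.2 v 1 x
        rwa [one_mul] at this
      rw [this] at hlip
      exact lt_of_le_of_lt hlip hv

end chiLemmas

theorem exists_rightInvariant_mean_chi_pos {G : Type*} [Group G] [TopologicalSpace G]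
    [IsTopologicalGroup G] (hG : SkewAmenable G) (H : Subgroup G) (hH : PreSyndetic H)
    (d : G → G → ℝ) (hd : InDelta G d) :
    ∃ μ : (G → ℝ) → ℝ, IsMean (IsRUCB G) μ ∧
      (∀ (g : G) (f : G → ℝ), IsRUCB G f → μ (fun x => f (x * g)) = μ f) ∧
      0 < μ (chi H d) := by
  classical
  obtain ⟨μ, hμ, hinv⟩ := hG
  -- the neighbourhood U
  have hcont : Continuous (fun v : G => d v 1) :=
    hd.2.2.2.2.2.1.comp (continuous_id.prodMk continuous_const)
  have hU : (fun v : G => d v 1) ⁻¹' Set.Iio (1/2) ∈ 𝓝 (1 : G) := by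
    apply hcont.continuousAt.preimage_mem_nhds
    rw [hd.2.1 1]
    exact Iio_mem_nhds (by norm_num)
  obtain ⟨E, hE⟩ := hH _ hU
  -- the translated family
  set F : G → G → ℝ := fun e x => chi H d (e⁻¹ * x) with hF
  have hFr : ∀ e : G, IsRUCB G (F e) := fun e =>
    isRUCB_leftTranslate e⁻¹ (chi_rucb H d hd)
  -- pointwise lower bound
  have hlb : ∀ g : G, (1:ℝ)/2 ≤ ∑ e ∈ E, F e g := by
    intro g
    obtain ⟨e, heE, u, hu, h, hh, rfl⟩ := hE g
    have hterm : (1:ℝ)/2 ≤ F e (e * u * h) := by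
      have hval : e⁻¹ * (e * u * h) = u * h := by group
      have hinfle : (⨅ h' : ↥H, d (u * h) (h' : G)) ≤ d u 1 := by
        have h1 : (⨅ h' : ↥H, d (u * h) (h' : G)) ≤ d (u * h) ((⟨h, hh⟩ : ↥H) : G) :=
          infd_le H d hd (u * h) ⟨h, hh⟩
        have h2 : d (u * h) h = d u 1 := by
          have := hd.2.2.2.2.2.2 u 1 h
          rwa [one_mul] at this
        simpa [h2] using h1
      have hu2 : d u 1 < 1/2 := hu
      have : (1:ℝ)/2 ≤ 1 - ⨅ h' : ↥H, d (u * h) (h' : G) := by linarith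
      simp only [hF, hval]
      exact this.trans (le_max_left _ _)
    calc (1:ℝ)/2 ≤ F e (e * u * h) := hterm
      _ ≤ ∑ e' ∈ E, F e' (e * u * h) :=
          Finset.single_le_sum (f := fun e' => F e' (e * u * h)) (fun e' _ => chi_nonneg H d _) heE
  -- mean of the sum
  have hsumr : IsRUCB G (fun x => ∑ e ∈ E, F e x) := isRUCB_sum E F (fun e _ => hFr e)
  have hmean_sum : (1:ℝ)/2 ≤ ∑ e ∈ E, μ (F e) := by
    rw [← mean_sum hμ E F (fun e _ => hFr e)]
    exact mean_ge_const hμ hsumr hlb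
  -- find a good translate
  have hexists : ∃ e ∈ E, 0 < μ (F e) := by
    by_contra hcon
    push_neg at hcon
    have : ∑ e ∈ E, μ (F e) ≤ 0 := Finset.sum_nonpos hcon
    linarith
  obtain ⟨e, _, hepos⟩ := hexists
  -- the translated mean
  refine ⟨fun f => μ (fun x => f (e⁻¹ * x)), ⟨?_, ?_, ?_, ?_⟩, ?_, hepos⟩
  · exact hμ.1
  · intro f hf hfnn
    exact hμ.2.1 _ (isRUCB_leftTranslate e⁻¹ hf) (fun x => hfnn _)
  · intro f g hf hg
    exact hμ.2.2.1 _ _ (isRUCB_leftTranslate e⁻¹ hf) (isRUCB_leftTranslate e⁻¹ hg)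
  · intro c f hf
    exact hμ.2.2.2 c _ (isRUCB_leftTranslate e⁻¹ hf)
  · intro g f hf
    have := hinv g (fun x => f (e⁻¹ * x)) (isRUCB_leftTranslate e⁻¹ hf)
    simpa [mul_assoc] using this
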